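/- The resolvent average is matrix concave in the tuple of matrices: for positive definite tuples A and B, weights λ, μ > 0, and t ∈ [0,1], R_μ(tA + (1−t)B, λ) ⪰ t·R_μ(A,λ) + (1−t)·R_μ(B,λ). -/

import Mathlib

open Matrix Finset

section Aux

variable {N : ℕ}

private lemma psd_smul' {c : ℝ} {M : Matrix (Fin N) (Fin N) ℝ} (hc : 0 ≤ c)
    (hM : M.PosSemidef) : (c • M).PosSemidef := by
  refine ⟨?_, fun x => ?_⟩
  · show (c • M)ᴴ = c • M
    rw [Matrix.conjTranspose_smul, star_trivial, hM.1.eq]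
  · exact (hM.smul hc).2 x

private lemma pd_smul' {c : ℝ} {M : Matrix (Fin N) (Fin N) ℝ} (hc : 0 < c)
    (hM : M.PosDef) : (c • M).PosDef := by
  refine ⟨?_, fun x hx => ?_⟩
  · show (c • M)ᴴ = c • M
    rw [Matrix.conjTranspose_smul, star_trivial, hM.1.eq]
  · exact (hM.smul hc).2 hx

private lemma psd_sum {ι : Type*} (s : Finset ι) (f : ι → Matrix (Fin N) (Fin N) ℝ)
    (h : ∀ i ∈ s, (f i).PosSemidef) : (∑ i ∈ s, f i).PosSemidef :=
  Finset.sum_induction f _ (fun _ _ ha hb => ha.add hb) Matrix.PosSemidef.zero h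

private lemma pd_sum {m : ℕ} (w : Fin (m + 1) → ℝ) (hw : ∀ i, 0 < w i)
    (M : Fin (m + 1) → Matrix (Fin N) (Fin N) ℝ) (hM : ∀ i, (M i).PosDef) :
    (∑ i, w i • M i).PosDef := by
  rw [Fin.sum_univ_succ]
  exact (pd_smul' (hw 0) (hM 0)).add_posSemidef
    (psd_sum _ _ fun i _ => psd_smul' (hw i.succ).le (hM i.succ).posSemidef)

/-- Matrix Cauchy–Schwarz: if `∑ wᵢ • Yᵢ = 1` and `H * S * H = H` with `S = ∑ wᵢ • Mᵢ⁻¹`,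
then `∑ wᵢ • YᵢᴴMᵢYᵢ - H ⪰ 0`. -/
private lemma cs_key {n : ℕ} (w : Fin n → ℝ) (hw : ∀ i, 0 < w i)
    (M Y : Fin n → Matrix (Fin N) (Fin N) ℝ) (hM : ∀ i, (M i).PosDef)
    (H : Matrix (Fin N) (Fin N) ℝ) (hH : H.IsHermitian)
    (hHSH : H * (∑ i, w i • (M i)⁻¹) * H = H)
    (hY : ∑ i, w i • Y i = 1) :
    ((∑ i, w i • ((Y i)ᴴ * M i * Y i)) - H).PosSemidef := by
  have hd : ∀ i, IsUnit (M i).det := fun i => (hM i).det_pos.ne'.isUnit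
  have e1 : ∀ i (Z : Matrix (Fin N) (Fin N) ℝ), M i * ((M i)⁻¹ * Z) = Z := fun i Z => by
    rw [← Matrix.mul_assoc, Matrix.mul_nonsing_inv _ (hd i), Matrix.one_mul]
  have e2 : ∀ i (Z : Matrix (Fin N) (Fin N) ℝ), (M i)⁻¹ * (M i * Z) = Z := fun i Z => by
    rw [← Matrix.mul_assoc, Matrix.nonsing_inv_mul _ (hd i), Matrix.one_mul]
  have eq_i : ∀ i, (Y i - (M i)⁻¹ * H)ᴴ * M i * (Y i - (M i)⁻¹ * H)
      = (Y i)ᴴ * M i * Y i - (Y i)ᴴ * H - H * Y i + H * ((M i)⁻¹ * H) := by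
    intro i
    rw [conjTranspose_sub, conjTranspose_mul, hH.eq, (hM i).isHermitian.inv.eq]
    simp only [Matrix.sub_mul, Matrix.mul_sub, Matrix.mul_assoc, e1, e2]
    abel
  have sumY : ∑ i, w i • ((Y i)ᴴ * H) = H := by
    simp_rw [← smul_mul_assoc, ← Finset.sum_mul]
    have : (∑ i, w i • (Y i)ᴴ) = (∑ i, w i • Y i)ᴴ := by
      rw [conjTranspose_sum]
      simp [Matrix.conjTranspose_smul]
    rw [this, hY, conjTranspose_one, Matrix.one_mul]
  have sumY' : ∑ i, w i • (H * Y i) = H := by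
    simp_rw [← mul_smul_comm, ← Finset.mul_sum, hY, Matrix.mul_one]
  have sumH : ∑ i, w i • (H * ((M i)⁻¹ * H)) = H := by
    have eterm : ∀ i, w i • (H * ((M i)⁻¹ * H)) = H * (w i • (M i)⁻¹) * H := fun i => by
      rw [Matrix.mul_assoc, smul_mul_assoc, mul_smul_comm]
    simp_rw [eterm]
    rw [← Finset.sum_mul, ← Finset.mul_sum, hHSH]
  have key : ∑ i, w i • ((Y i - (M i)⁻¹ * H)ᴴ * M i * (Y i - (M i)⁻¹ * H))
      = (∑ i, w i • ((Y i)ᴴ * M i * Y i)) - H := by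
    calc ∑ i, w i • ((Y i - (M i)⁻¹ * H)ᴴ * M i * (Y i - (M i)⁻¹ * H))
        = ∑ i, (w i • ((Y i)ᴴ * M i * Y i) - w i • ((Y i)ᴴ * H) - w i • (H * Y i)
            + w i • (H * ((M i)⁻¹ * H))) := by
          refine Finset.sum_congr rfl fun i _ => ?_
          rw [eq_i i]
          simp only [smul_sub, smul_add]
      _ = (∑ i, w i • ((Y i)ᴴ * M i * Y i)) - (∑ i, w i • ((Y i)ᴴ * H))
            - (∑ i, w i • (H * Y i)) + ∑ i, w i • (H * ((M i)⁻¹ * H)) := by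
          rw [Finset.sum_add_distrib, Finset.sum_sub_distrib, Finset.sum_sub_distrib]
      _ = (∑ i, w i • ((Y i)ᴴ * M i * Y i)) - H := by rw [sumY, sumY', sumH]; abel
  rw [← key]
  exact psd_sum _ _ fun i _ => psd_smul' (hw i).le
    ((hM i).posSemidef.conjTranspose_mul_mul_same _)

private lemma main_aux {m : ℕ} (w : Fin (m + 1) → ℝ) (hw : ∀ i, 0 < w i)
    (MA MB MT : Fin (m + 1) → Matrix (Fin N) (Fin N) ℝ)
    (hMA : ∀ i, (MA i).PosDef) (hMB : ∀ i, (MB i).PosDef) (hMT : ∀ i, (MT i).PosDef)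
    (t : ℝ) (ht0 : 0 ≤ t) (ht1 : t ≤ 1)
    (hcomb : ∀ i, MT i = t • MA i + (1 - t) • MB i) :
    ((∑ i, w i • (MT i)⁻¹)⁻¹
      - (t • (∑ i, w i • (MA i)⁻¹)⁻¹ + (1 - t) • (∑ i, w i • (MB i)⁻¹)⁻¹)).PosSemidef := by
  set SA := ∑ i, w i • (MA i)⁻¹ with hSA_def
  set SB := ∑ i, w i • (MB i)⁻¹ with hSB_def
  set ST := ∑ i, w i • (MT i)⁻¹ with hST_def
  have hSA : SA.PosDef := pd_sum w hw _ fun i => (hMA i).inv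
  have hSB : SB.PosDef := pd_sum w hw _ fun i => (hMB i).inv
  have hST : ST.PosDef := pd_sum w hw _ fun i => (hMT i).inv
  have hdT : ∀ i, IsUnit (MT i).det := fun i => (hMT i).det_pos.ne'.isUnit
  set HA := SA⁻¹ with hHA_def
  set HB := SB⁻¹ with hHB_def
  set HT := ST⁻¹ with hHT_def
  set Y : Fin (m + 1) → Matrix (Fin N) (Fin N) ℝ := fun i => (MT i)⁻¹ * HT with hY_def
  have hY : ∑ i, w i • Y i = 1 := by
    simp_rw [hY_def, ← smul_mul_assoc, ← Finset.sum_mul, ← hST_def, hHT_def,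
      Matrix.mul_nonsing_inv _ hST.det_pos.ne'.isUnit]
  have hHSH : ∀ (S : Matrix (Fin N) (Fin N) ℝ), S.PosDef → S⁻¹ * S * S⁻¹ = S⁻¹ := by
    intro S hS
    rw [Matrix.nonsing_inv_mul _ hS.det_pos.ne'.isUnit, Matrix.one_mul]
  have csA := cs_key w hw MA Y hMA HA hSA.isHermitian.inv (hHSH SA hSA) hY
  have csB := cs_key w hw MB Y hMB HB hSB.isHermitian.inv (hHSH SB hSB) hY
  -- identity: HT = ∑ wᵢ • YᵢᴴMTᵢYᵢ
  have hYi : ∀ i, (Y i)ᴴ * MT i * Y i = HT * ((MT i)⁻¹ * HT) := by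
    intro i
    simp only [hY_def, hHT_def]
    rw [conjTranspose_mul, (hMT i).isHermitian.inv.eq, hST.isHermitian.inv.eq]
    rw [Matrix.mul_assoc ST⁻¹ (MT i)⁻¹ (MT i), Matrix.nonsing_inv_mul _ (hdT i),
      Matrix.mul_one]
  have hHT_sum : ∑ i, w i • ((Y i)ᴴ * MT i * Y i) = HT := by
    have eterm : ∀ i, w i • (HT * ((MT i)⁻¹ * HT)) = HT * (w i • (MT i)⁻¹) * HT := fun i => by
      rw [Matrix.mul_assoc, smul_mul_assoc, mul_smul_comm]
    simp_rw [hYi, eterm]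
    rw [← Finset.sum_mul, ← Finset.mul_sum]
    have : (∑ i, w i • (MT i)⁻¹) = ST := hST_def.symm
    rw [this, hHT_def, hHSH ST hST]
  have split : HT = t • (∑ i, w i • ((Y i)ᴴ * MA i * Y i))
      + (1 - t) • (∑ i, w i • ((Y i)ᴴ * MB i * Y i)) := by
    rw [← hHT_sum, Finset.smul_sum, Finset.smul_sum, ← Finset.sum_add_distrib]
    refine Finset.sum_congr rfl fun i _ => ?_
    rw [hcomb i]
    simp only [Matrix.add_mul, Matrix.mul_add, smul_mul_assoc, mul_smul_comm, smul_add,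
      smul_smul, mul_comm (w i) t, mul_comm (w i) (1 - t)]
  have final : HT - (t • HA + (1 - t) • HB)
      = t • ((∑ i, w i • ((Y i)ᴴ * MA i * Y i)) - HA)
        + (1 - t) • ((∑ i, w i • ((Y i)ᴴ * MB i * Y i)) - HB) := by
    rw [split]; module
  rw [final]
  exact (psd_smul' ht0 csA).add (psd_smul' (by linarith) csB)

end Aux

theorem resolvent_average_matrix_concave (N n : ℕ)
    (A B : Fin n → Matrix (Fin N) (Fin N) ℝ) (w : Fin n → ℝ) (μ : ℝ)
    (hA : ∀ i, (A i).PosDef) (hB : ∀ i, (B i).PosDef)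
    (hw : ∀ i, 0 < w i) (hw1 : ∑ i, w i = 1) (hμ : 0 < μ)
    (t : ℝ) (ht0 : 0 ≤ t) (ht1 : t ≤ 1) :
    (((∑ i, w i • (t • A i + (1 - t) • B i + μ⁻¹ • 1)⁻¹)⁻¹ - μ⁻¹ • (1 : Matrix (Fin N) (Fin N) ℝ))
      - (t • ((∑ i, w i • (A i + μ⁻¹ • 1)⁻¹)⁻¹ - μ⁻¹ • 1)
        + (1 - t) • ((∑ i, w i • (B i + μ⁻¹ • 1)⁻¹)⁻¹ - μ⁻¹ • 1))).PosSemidef := by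
  rcases n with _ | m
  · exact absurd hw1 (by simp)
  · have hc : (μ⁻¹ • (1 : Matrix (Fin N) (Fin N) ℝ)).PosDef :=
      pd_smul' (inv_pos.2 hμ) Matrix.PosDef.one
    have hMA : ∀ i, (A i + μ⁻¹ • (1 : Matrix (Fin N) (Fin N) ℝ)).PosDef := fun i =>
      (hA i).add_posSemidef hc.posSemidef
    have hMB : ∀ i, (B i + μ⁻¹ • (1 : Matrix (Fin N) (Fin N) ℝ)).PosDef := fun i =>
      (hB i).add_posSemidef hc.posSemidef
    have hMT : ∀ i, (t • A i + (1 - t) • B i + μ⁻¹ • (1 : Matrix (Fin N) (Fin N) ℝ)).PosDef :=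
      fun i => Matrix.PosDef.posSemidef_add ((psd_smul' ht0 (hA i).posSemidef).add
        (psd_smul' (by linarith : (0:ℝ) ≤ 1 - t) (hB i).posSemidef)) hc
    have hcomb : ∀ i, t • A i + (1 - t) • B i + μ⁻¹ • (1 : Matrix (Fin N) (Fin N) ℝ)
        = t • (A i + μ⁻¹ • 1) + (1 - t) • (B i + μ⁻¹ • 1) := fun i => by module
    have := main_aux w hw _ _ _ hMA hMB hMT t ht0 ht1 hcomb
    convert this using 1
    module
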